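/- Let Ω ⊂ ℝ^d be a nonempty compact convex set, let μ_src and μ_tgt be Borel probability measures supported in Ω, and let H ∈ ℕ. Let π⋆_0,…,π⋆_H : Ω → Ω be measurable maps with (π̄⋆_H)_# μ_src = μ_tgt, and let V⋆ = (V⋆_0,…,V⋆_{H+1}) be feasible for the dynamic dual LP on Ω with horizon H, such that the dynamic cost of the policy equals the dual objective ∫V⋆_0 dμ_src − ∫V⋆_{H+1} dμ_tgt. Then for every h ∈ {0,…,H}, the complementary slackness equality V⋆_h(x) − V⋆_{h+1}(π⋆_h(x)) = ((H+1)/2)‖π⋆_h(x) − x‖² holds for (π̄⋆_{h−1})_# μ_src-almost every x ∈ Ω. -/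

import Mathlib

open MeasureTheory

/-- `trajComp π h = π̄_{h-1} = π_{h-1} ∘ ⋯ ∘ π_0`, with `trajComp π 0 = π̄_{-1} = id`. -/
def trajComp {α : Type*} (π : ℕ → α → α) : ℕ → α → α
  | 0 => id
  | n + 1 => π n ∘ trajComp π n

/-- A measurable function bounded by a constant is integrable w.r.t. a finite measure. -/
lemma aux_integrable_of_bdd {Ω' : Type*} [MeasurableSpace Ω'] {μ : Measure Ω'}
    [IsFiniteMeasure μ] {f : Ω' → ℝ} (hm : AEStronglyMeasurable f μ) {C : ℝ}
    (hC : ∀ x, |f x| ≤ C) : Integrable f μ :=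
  Integrable.mono' (integrable_const C) hm
    (Filter.Eventually.of_forall fun x => by simpa [Real.norm_eq_abs] using hC x)

/-- complementary slackness. If a feasible policy's dynamic cost equals the
objective of a feasible dynamic dual family `V⋆`, then for every `h ≤ H`,
`V⋆_h(x) − V⋆_{h+1}(π⋆_h(x)) = ((H+1)/2)‖π⋆_h(x) − x‖²` holds for
`(π̄⋆_{h−1})_# μsrc`-a.e. `x ∈ Ω`. -/
theorem stmt13 {d : ℕ} (Ω : Set (EuclideanSpace ℝ (Fin d)))
    (hne : Ω.Nonempty) (hcomp : IsCompact Ω) (hconv : Convex ℝ Ω)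
    (μsrc μtgt : Measure Ω) [IsProbabilityMeasure μsrc] [IsProbabilityMeasure μtgt]
    (H : ℕ) (π : ℕ → Ω → Ω) (hπmeas : ∀ h ≤ H, Measurable (π h))
    (hπfeas : μsrc.map (trajComp π (H + 1)) = μtgt)
    (V : ℕ → Ω → ℝ) (hVcont : ∀ h ≤ H + 1, Continuous (V h))
    (hVfeas : ∀ h ≤ H, ∀ x y : Ω,
      V h x ≤ ((H : ℝ) + 1) / 2 * ‖x.val - y.val‖ ^ 2 + V (h + 1) y)
    (hzero : ((H : ℝ) + 1) / 2 *
        ∑ h ∈ Finset.range (H + 1),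
          ∫ x, ‖(trajComp π (h + 1) x).val - (trajComp π h x).val‖ ^ 2 ∂μsrc =
      ∫ x, V 0 x ∂μsrc - ∫ x, V (H + 1) x ∂μtgt) :
    ∀ h ≤ H, ∀ᵐ x ∂(μsrc.map (trajComp π h)),
      V h x - V (h + 1) (π h x) = ((H : ℝ) + 1) / 2 * ‖(π h x).val - x.val‖ ^ 2 := by
  have hcs : CompactSpace Ω := isCompact_iff_compactSpace.mp hcomp
  set c : ℝ := ((H : ℝ) + 1) / 2 with hc
  -- measurability of the partial compositions
  have Tmeas : ∀ k, k ≤ H + 1 → Measurable (trajComp π k) := by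
    intro k
    induction k with
    | zero => intro _; exact measurable_id
    | succ n ih =>
      intro hn
      exact (hπmeas n (by omega)).comp (ih (by omega))
  -- boundedness of the potentials
  have Vbdd : ∀ k ≤ H + 1, ∃ C, ∀ x : Ω, |V k x| ≤ C := by
    intro k hk
    obtain ⟨C, hC⟩ := isCompact_univ.exists_bound_of_continuousOn (hVcont k hk).continuousOn
    exact ⟨C, fun x => by simpa [Real.norm_eq_abs] using hC x (Set.mem_univ x)⟩
  -- bound on the norm of points of Ω
  obtain ⟨R, hR⟩ := hcomp.isBounded.exists_norm_le
  have hnormsq : ∀ x y : Ω, |‖x.val - y.val‖ ^ 2| ≤ (R + R) ^ 2 := by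
    intro x y
    rw [abs_of_nonneg (by positivity)]
    have h1 : ‖x.val - y.val‖ ≤ R + R := by
      calc ‖x.val - y.val‖ ≤ ‖x.val‖ + ‖y.val‖ := norm_sub_le _ _
        _ ≤ R + R := add_le_add (hR _ x.2) (hR _ y.2)
    exact pow_le_pow_left₀ (norm_nonneg _) h1 2
  -- the slack function
  set G : ℕ → Ω → ℝ := fun k x => c * ‖(π k x).val - x.val‖ ^ 2 + V (k + 1) (π k x) - V k x
    with hG
  have Gnonneg : ∀ k ≤ H, ∀ x, 0 ≤ G k x := by
    intro k hk x
    have := hVfeas k hk x (π k x)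
    rw [norm_sub_rev] at this
    simp only [hG]
    linarith
  have Gmeas : ∀ k ≤ H, Measurable (G k) := by
    intro k hk
    have hπm := hπmeas k hk
    have hn : Measurable fun x : Ω => ‖(π k x).val - x.val‖ ^ 2 :=
      (((measurable_subtype_coe.comp hπm).sub measurable_subtype_coe).norm).pow_const 2
    exact ((hn.const_mul c).add ((hVcont (k + 1) (by omega)).measurable.comp hπm)).sub
      (hVcont k (by omega)).measurable
  -- integrabilities
  have iV : ∀ k ≤ H + 1, Integrable (fun x => V k (trajComp π k x)) μsrc := by
    intro k hk
    obtain ⟨C, hC⟩ := Vbdd k hk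
    exact aux_integrable_of_bdd
      (((hVcont k hk).measurable.comp (Tmeas k hk)).aestronglyMeasurable)
      (fun x => hC _)
  have iN : ∀ k ≤ H, Integrable
      (fun x => ‖(trajComp π (k + 1) x).val - (trajComp π k x).val‖ ^ 2) μsrc := by
    intro k hk
    exact aux_integrable_of_bdd
      ((((measurable_subtype_coe.comp (Tmeas (k + 1) (by omega))).sub
        (measurable_subtype_coe.comp (Tmeas k (by omega)))).norm.pow_const 2).aestronglyMeasurable)
      (fun x => hnormsq _ _)
  -- the integrals of the slack along the trajectory
  set I : ℕ → ℝ := fun k => ∫ x, G k (trajComp π k x) ∂μsrc with hI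
  set B : ℕ → ℝ := fun k => ∫ x, V k (trajComp π k x) ∂μsrc with hB
  have hcomp1 : ∀ k (x : Ω), π k (trajComp π k x) = trajComp π (k + 1) x := fun k x => rfl
  have Isplit : ∀ k ≤ H, I k =
      c * (∫ x, ‖(trajComp π (k + 1) x).val - (trajComp π k x).val‖ ^ 2 ∂μsrc)
        + (B (k + 1) - B k) := by
    intro k hk
    have : I k = ∫ x, (c * ‖(trajComp π (k + 1) x).val - (trajComp π k x).val‖ ^ 2
        + V (k + 1) (trajComp π (k + 1) x)) - V k (trajComp π k x) ∂μsrc := by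
      simp only [hI, hG, hcomp1]
    have hi1 : Integrable (fun x => c * ‖(trajComp π (k + 1) x).val - (trajComp π k x).val‖ ^ 2)
        μsrc := (iN k hk).const_mul c
    have hi2 : Integrable (fun x => V (k + 1) (trajComp π (k + 1) x)) μsrc :=
      iV (k + 1) (by omega)
    have hif : Integrable (fun x => c * ‖(trajComp π (k + 1) x).val - (trajComp π k x).val‖ ^ 2
        + V (k + 1) (trajComp π (k + 1) x)) μsrc := hi1.add hi2
    rw [this, integral_sub hif (iV k (by omega)), integral_add hi1 hi2, integral_const_mul]
    ring
  have hsum : ∑ k ∈ Finset.range (H + 1), I k = 0 := by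
    have e1 : ∑ k ∈ Finset.range (H + 1), I k =
        c * ∑ k ∈ Finset.range (H + 1),
          ∫ x, ‖(trajComp π (k + 1) x).val - (trajComp π k x).val‖ ^ 2 ∂μsrc
        + (B (H + 1) - B 0) := by
      rw [← Finset.sum_range_sub B (H + 1), Finset.mul_sum, ← Finset.sum_add_distrib]
      exact Finset.sum_congr rfl fun k hk =>
        Isplit k (Nat.lt_succ_iff.mp (Finset.mem_range.mp hk))
    have hB0 : B 0 = ∫ x, V 0 x ∂μsrc := by simp [hB, trajComp]
    have hBH : B (H + 1) = ∫ x, V (H + 1) x ∂μtgt := by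
      rw [hB, ← hπfeas, integral_map (Tmeas (H + 1) le_rfl).aemeasurable
        ((hVcont (H + 1) le_rfl).measurable.aestronglyMeasurable)]
    rw [e1, hzero, hB0, hBH]
    ring
  have Inonneg : ∀ k ∈ Finset.range (H + 1), 0 ≤ I k := by
    intro k hk
    exact integral_nonneg fun x => Gnonneg k (Nat.lt_succ_iff.mp (Finset.mem_range.mp hk)) _
  have Izero : ∀ k ∈ Finset.range (H + 1), I k = 0 :=
    (Finset.sum_eq_zero_iff_of_nonneg Inonneg).mp hsum
  -- conclude
  intro h hh
  have hTm := Tmeas h (by omega)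
  haveI : IsProbabilityMeasure (μsrc.map (trajComp π h)) :=
    Measure.isProbabilityMeasure_map hTm.aemeasurable
  have hGm := Gmeas h hh
  have hmap : ∫ x, G h x ∂(μsrc.map (trajComp π h)) = 0 := by
    rw [integral_map hTm.aemeasurable hGm.aestronglyMeasurable]
    exact Izero h (Finset.mem_range.mpr (by omega))
  have hint : Integrable (G h) (μsrc.map (trajComp π h)) := by
    obtain ⟨C1, hC1⟩ := Vbdd h (by omega)
    obtain ⟨C2, hC2⟩ := Vbdd (h + 1) (by omega)
    refine aux_integrable_of_bdd hGm.aestronglyMeasurable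
      (C := |c| * (R + R) ^ 2 + C2 + C1) fun x => ?_
    simp only [hG]
    calc |c * ‖(π h x).val - x.val‖ ^ 2 + V (h + 1) (π h x) - V h x|
        ≤ |c * ‖(π h x).val - x.val‖ ^ 2| + |V (h + 1) (π h x)| + |V h x| := by
          exact (abs_sub _ _).trans (add_le_add_left (abs_add_le _ _) _)
      _ ≤ |c| * (R + R) ^ 2 + C2 + C1 := by
          have := hnormsq (π h x) x
          have h2 := hC2 (π h x)
          have h1 := hC1 x
          rw [abs_mul]
          have : |c| * |‖(π h x).val - x.val‖ ^ 2| ≤ |c| * (R + R) ^ 2 :=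
            mul_le_mul_of_nonneg_left this (abs_nonneg _)
          linarith
  have hae : G h =ᵐ[μsrc.map (trajComp π h)] 0 :=
    (integral_eq_zero_iff_of_nonneg (Gnonneg h hh) hint).mp hmap
  filter_upwards [hae] with x hx
  simp only [hG, Pi.zero_apply] at hx
  linarith
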